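/- Let 𝒲 be the quotient of the free unital ℂ-algebra on six generators U, V, W, U⁻, V⁻, W⁻ by the two-sided ideal generated by V·U − q⁴·U·V, W·V − q⁴·V·W, U·W − q⁴·W·U, U·U⁻ − 1, U⁻·U − 1, V·V⁻ − 1, V⁻·V − 1, W·W⁻ − 1, W⁻·W − 1. Let E be a nonzero finite-dimensional complex vector space and let ρ : 𝒲 → End(E) be a unital ℂ-algebra homomorphism such that the only subspaces of E invariant under ρ(x) for all x ∈ 𝒲 are {0} and E. Then dim E = N, and there exist nonzero complex numbers u, v, h and a linear isomorphism T : ℂ^N → E such that T⁻¹·ρ(U)·T = M_U(u), T⁻¹·ρ(V)·T = M_V(v), and T⁻¹·ρ(W)·T = M_W(u,v,h). -/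

import Mathlib

open Matrix

/-- The image of the generator `U` of the Chekhov–Fock algebra of the once-punctured torus
under the standard representation: the diagonal matrix with entries `u·q^{4i}`. -/
noncomputable def MU (N : ℕ) (q u : ℂ) : Matrix (Fin N) (Fin N) ℂ :=
  Matrix.diagonal fun i => u * q ^ (4 * (i : ℕ))

/-- The image of the generator `V`: the cyclic shift matrix with entries `v`. -/
noncomputable def MV (N : ℕ) (v : ℂ) : Matrix (Fin N) (Fin N) ℂ :=
  Matrix.of fun i j => if (j : ℕ) = ((i : ℕ) + 1) % N then v else 0

/-- The image of the generator `W`: `q⁻²·h·(M_U(u)·M_V(v))⁻¹`. -/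
noncomputable def MW (N : ℕ) (q u v h : ℂ) : Matrix (Fin N) (Fin N) ℂ :=
  ((q ^ 2)⁻¹ * h) • (MU N q u * MV N v)⁻¹

/-- The generators of the free algebra on six generators `U, V, W, U⁻¹, V⁻¹, W⁻¹`
(in this order). -/
noncomputable def X (i : Fin 6) : FreeAlgebra ℂ (Fin 6) := FreeAlgebra.ι ℂ i

/-- The defining relations of the Chekhov–Fock algebra of the once-punctured torus:
`VU = q⁴UV`, `WV = q⁴VW`, `UW = q⁴WU`, and the inverse relations. -/
inductive CFRel (q : ℂ) : FreeAlgebra ℂ (Fin 6) → FreeAlgebra ℂ (Fin 6) → Prop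
  | vu : CFRel q (X 1 * X 0) ((q ^ 4) • (X 0 * X 1))
  | wv : CFRel q (X 2 * X 1) ((q ^ 4) • (X 1 * X 2))
  | uw : CFRel q (X 0 * X 2) ((q ^ 4) • (X 2 * X 0))
  | uuinv : CFRel q (X 0 * X 3) 1
  | uinvu : CFRel q (X 3 * X 0) 1
  | vvinv : CFRel q (X 1 * X 4) 1
  | vinvv : CFRel q (X 4 * X 1) 1
  | wwinv : CFRel q (X 2 * X 5) 1
  | winvw : CFRel q (X 5 * X 2) 1

section CFAux

variable {R : Type*} [Ring R] [Algebra ℂ R]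

lemma cf_swap_pow {A B : R} {c : ℂ} (h : B * A = c • (A * B)) (n : ℕ) :
    B * A ^ n = c ^ n • (A ^ n * B) := by
  induction n with
  | zero => simp
  | succ n ih =>
    calc B * A ^ (n + 1) = (B * A ^ n) * A := by rw [pow_succ, mul_assoc]
      _ = c ^ n • (A ^ n * (B * A)) := by rw [ih, smul_mul_assoc, mul_assoc]
      _ = c ^ n • (A ^ n * (c • (A * B))) := by rw [h]
      _ = c ^ (n + 1) • (A ^ (n + 1) * B) := by
          rw [mul_smul_comm, smul_smul, ← mul_assoc, ← pow_succ, ← pow_succ]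

lemma cf_swap_pow' {A B : R} {c : ℂ} (h : B * A = c • (A * B)) (n : ℕ) :
    B ^ n * A = c ^ n • (A * B ^ n) := by
  induction n with
  | zero => simp
  | succ n ih =>
    calc B ^ (n + 1) * A = B ^ n * (B * A) := by rw [pow_succ, mul_assoc]
      _ = B ^ n * (c • (A * B)) := by rw [h]
      _ = c • ((B ^ n * A) * B) := by rw [mul_smul_comm, mul_assoc]
      _ = c • ((c ^ n • (A * B ^ n)) * B) := by rw [ih]
      _ = c ^ (n + 1) • (A * B ^ (n + 1)) := by
          rw [smul_mul_assoc, smul_smul, mul_assoc, ← pow_succ, ← pow_succ']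

omit [Algebra ℂ R] in
lemma cf_comm_inv {A A' S : R} (h1 : A * A' = 1) (h2 : A' * A = 1)
    (h : Commute S A) : Commute S A' := by
  have := Commute.units_inv_right (a := S) (u := ⟨A, A', h1, h2⟩) h
  exact this

lemma cf_swap_inv {A B B' : R} {c : ℂ} (h : B * A = c • (A * B))
    (h1 : B * B' = 1) (h2 : B' * B = 1) : A * B' = c • (B' * A) := by
  calc A * B' = (B' * B) * (A * B') := by rw [h2, one_mul]
    _ = B' * ((B * A) * B') := by rw [mul_assoc, ← mul_assoc B A B']
    _ = B' * ((c • (A * B)) * B') := by rw [h]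
    _ = c • (B' * (A * (B * B'))) := by
        rw [smul_mul_assoc, mul_smul_comm, mul_assoc A B B']
    _ = c • (B' * A) := by rw [h1, mul_one]

end CFAux

/-- Every irreducible finite-dimensional representation of the Chekhov–Fock algebra
`𝒲 = RingQuot (CFRel q)` has dimension `N` and is conjugate to a standard representation
`χ_{u,v,h}`. -/
theorem stmt4 (N : ℕ) (hN : Odd N) (hNpos : 0 < N) (q : ℂ) (hq : IsPrimitiveRoot q N)
    (E : Type) [AddCommGroup E] [Module ℂ E] [FiniteDimensional ℂ E] [Nontrivial E]
    (ρ : RingQuot (CFRel q) →ₐ[ℂ] Module.End ℂ E)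
    (hirr : ∀ p : Submodule ℂ E,
      (∀ x : RingQuot (CFRel q), ∀ e ∈ p, ρ x e ∈ p) → p = ⊥ ∨ p = ⊤) :
    Module.finrank ℂ E = N ∧
    ∃ u v h : ℂ, u ≠ 0 ∧ v ≠ 0 ∧ h ≠ 0 ∧
      ∃ T : (Fin N → ℂ) ≃ₗ[ℂ] E,
        (∀ x, T.symm (ρ (RingQuot.mkAlgHom ℂ (CFRel q) (X 0)) (T x))
            = (MU N q u).mulVec x) ∧
        (∀ x, T.symm (ρ (RingQuot.mkAlgHom ℂ (CFRel q) (X 1)) (T x))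
            = (MV N v).mulVec x) ∧
        (∀ x, T.symm (ρ (RingQuot.mkAlgHom ℂ (CFRel q) (X 2)) (T x))
            = (MW N q u v h).mulVec x) := by
  classical
  haveI : NeZero N := ⟨hNpos.ne'⟩
  set mk := RingQuot.mkAlgHom ℂ (CFRel q) with hmkdef
  set A := ρ (mk (X 0)) with hAdef
  set B := ρ (mk (X 1)) with hBdef
  set C := ρ (mk (X 2)) with hCdef
  set A' := ρ (mk (X 3)) with hA'def
  set B' := ρ (mk (X 4)) with hB'def
  set C' := ρ (mk (X 5)) with hC'def
  have rel : ∀ {a b}, CFRel q a b → ρ (mk a) = ρ (mk b) := fun {a b} h => by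
    rw [RingQuot.mkAlgHom_rel ℂ h]
  have hBA : B * A = (q ^ 4) • (A * B) := by
    have := rel CFRel.vu; simpa [_root_.map_mul, _root_.map_smul] using this
  have hCB : C * B = (q ^ 4) • (B * C) := by
    have := rel CFRel.wv; simpa [_root_.map_mul, _root_.map_smul] using this
  have hAC : A * C = (q ^ 4) • (C * A) := by
    have := rel CFRel.uw; simpa [_root_.map_mul, _root_.map_smul] using this
  have hAA' : A * A' = 1 := by
    have := rel CFRel.uuinv; simpa [_root_.map_mul, _root_.map_one] using this
  have hA'A : A' * A = 1 := by
    have := rel CFRel.uinvu; simpa [_root_.map_mul, _root_.map_one] using this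
  have hBB' : B * B' = 1 := by
    have := rel CFRel.vvinv; simpa [_root_.map_mul, _root_.map_one] using this
  have hB'B : B' * B = 1 := by
    have := rel CFRel.vinvv; simpa [_root_.map_mul, _root_.map_one] using this
  have hCC' : C * C' = 1 := by
    have := rel CFRel.wwinv; simpa [_root_.map_mul, _root_.map_one] using this
  have hC'C : C' * C = 1 := by
    have := rel CFRel.winvw; simpa [_root_.map_mul, _root_.map_one] using this
  -- basic facts about q
  have hqN : q ^ N = 1 := hq.pow_eq_one
  have hq0 : q ≠ 0 := fun h0 => by
    rw [h0, zero_pow hNpos.ne'] at hqN; exact zero_ne_one hqN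
  have hcop : Nat.Coprime 4 N := by
    have := (Nat.coprime_two_left.mpr hN).pow_left 2
    norm_num at this; exact this
  have hq4 : IsPrimitiveRoot (q ^ 4) N := hq.pow_of_coprime 4 hcop
  have hq4N : (q ^ 4) ^ N = 1 := hq4.pow_eq_one
  have honeE : (1 : Module.End ℂ E) ≠ 0 := by
    obtain ⟨w, hw⟩ := exists_ne (0 : E)
    intro h01
    exact hw (by calc w = (1 : Module.End ℂ E) w := rfl
      _ = (0 : Module.End ℂ E) w := by rw [h01]
      _ = 0 := rfl)
  -- invariance extends from generators to the whole algebra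
  have extend_inv : ∀ p : Submodule ℂ E, (∀ i : Fin 6, ∀ e ∈ p, ρ (mk (X i)) e ∈ p) →
      ∀ x : RingQuot (CFRel q), ∀ e ∈ p, ρ x e ∈ p := by
    intro p hp x
    obtain ⟨y, rfl⟩ := RingQuot.mkAlgHom_surjective ℂ (CFRel q) x
    induction y using FreeAlgebra.induction with
    | grade0 r =>
      intro e he
      have : ρ (mk (algebraMap ℂ _ r)) e = r • e := by
        rw [AlgHom.commutes, AlgHom.commutes]
        rfl
      rw [this]; exact p.smul_mem r he
    | grade1 i => exact hp i
    | mul a b ha hb =>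
      intro e he
      have : ρ (mk (a * b)) e = ρ (mk a) (ρ (mk b) e) := by
        rw [_root_.map_mul, _root_.map_mul]; rfl
      rw [this]; exact ha _ (hb e he)
    | add a b ha hb =>
      intro e he
      have : ρ (mk (a + b)) e = ρ (mk a) e + ρ (mk b) e := by
        rw [_root_.map_add, _root_.map_add]; rfl
      rw [this]; exact p.add_mem (ha e he) (hb e he)
  -- Schur's lemma
  have schur : ∀ S : Module.End ℂ E, (∀ i : Fin 6, Commute S (ρ (mk (X i)))) →
      ∃ c : ℂ, S = c • 1 := by
    intro S hS
    have hcomm : ∀ x : RingQuot (CFRel q), Commute S (ρ x) := by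
      intro x
      obtain ⟨y, rfl⟩ := RingQuot.mkAlgHom_surjective ℂ (CFRel q) x
      induction y using FreeAlgebra.induction with
      | grade0 r =>
        have : ρ (mk (algebraMap ℂ _ r)) = algebraMap ℂ (Module.End ℂ E) r := by
          rw [AlgHom.commutes, AlgHom.commutes]
        rw [this]; exact (Algebra.commutes r S).symm
      | grade1 i => exact hS i
      | mul a b ha hb => rw [_root_.map_mul, _root_.map_mul]; exact ha.mul_right hb
      | add a b ha hb => rw [_root_.map_add, _root_.map_add]; exact ha.add_right hb
    obtain ⟨c, hc⟩ := Module.End.exists_eigenvalue S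
    refine ⟨c, ?_⟩
    have hSc : ∀ x : RingQuot (CFRel q), (S - c • 1) * ρ x = ρ x * (S - c • 1) := by
      intro x
      rw [sub_mul, mul_sub, hcomm x]
      congr 1
      rw [smul_mul_assoc, mul_smul_comm, one_mul, mul_one]
    have hker : ∀ x : RingQuot (CFRel q), ∀ e ∈ LinearMap.ker (S - c • 1),
        ρ x e ∈ LinearMap.ker (S - c • 1) := by
      intro x e he
      rw [LinearMap.mem_ker] at he ⊢
      calc (S - c • 1) (ρ x e) = ((S - c • 1) * ρ x) e := rfl
        _ = (ρ x * (S - c • 1)) e := by rw [hSc]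
        _ = ρ x ((S - c • 1) e) := rfl
        _ = 0 := by rw [he, map_zero]
    rcases hirr _ hker with hbot | htop
    · exfalso
      obtain ⟨w, hw⟩ := hc.exists_hasEigenvector
      have hwmem : w ∈ LinearMap.ker (S - c • 1) := by
        rw [LinearMap.mem_ker, LinearMap.sub_apply, hw.apply_eq_smul,
          LinearMap.smul_apply, Module.End.one_apply, sub_self]
      rw [hbot, Submodule.mem_bot] at hwmem
      exact hw.right hwmem
    · have h0 : S - c • 1 = 0 := LinearMap.ker_eq_top.mp htop
      have := sub_eq_zero.mp h0
      exact this
  have hq40 : (q ^ 4 : ℂ) ≠ 0 := pow_ne_zero 4 hq0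
  -- B^N commutes with the images of all generators
  have hcomm_BN_A : B ^ N * A = A * B ^ N := by
    rw [cf_swap_pow' hBA N, hq4N, one_smul]
  have hcomm_C_BN : C * B ^ N = B ^ N * C := by
    rw [cf_swap_pow hCB N, hq4N, one_smul]
  have hBNcomm : ∀ i : Fin 6, Commute (B ^ N) (ρ (mk (X i))) := by
    intro i
    fin_cases i
    · exact hcomm_BN_A
    · exact (Commute.refl B).pow_left N
    · exact hcomm_C_BN.symm
    · exact cf_comm_inv hAA' hA'A hcomm_BN_A
    · exact cf_comm_inv hBB' hB'B ((Commute.refl B).pow_left N)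
    · exact cf_comm_inv hCC' hC'C hcomm_C_BN.symm
  obtain ⟨b, hBN⟩ := schur _ hBNcomm
  have hcBB' : Commute B B' := by
    show B * B' = B' * B
    rw [hBB', hB'B]
  have hBB'N : B ^ N * B' ^ N = 1 := by
    rw [← hcBB'.mul_pow, hBB', one_pow]
  have hB'BN : B' ^ N * B ^ N = 1 := by
    rw [← hcBB'.symm.mul_pow, hB'B, one_pow]
  have hb0 : b ≠ 0 := by
    intro hb
    rw [hb, zero_smul] at hBN
    rw [hBN, zero_mul] at hBB'N
    exact honeE hBB'N.symm
  have hB'N : B' ^ N = b⁻¹ • (1 : Module.End ℂ E) := by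
    have h1 : b • B' ^ N = 1 := by
      calc b • B' ^ N = B' ^ N * (b • 1) := by rw [mul_smul_comm, mul_one]
        _ = B' ^ N * B ^ N := by rw [← hBN]
        _ = 1 := hB'BN
    calc B' ^ N = (b⁻¹ * b) • B' ^ N := by rw [inv_mul_cancel₀ hb0, one_smul]
      _ = b⁻¹ • (b • B' ^ N) := by rw [smul_smul]
      _ = b⁻¹ • 1 := by rw [h1]
  -- the element A*B*C is central
  have hCA : C * A = (q ^ 4)⁻¹ • (A * C) := by
    rw [hAC, smul_smul, inv_mul_cancel₀ hq40, one_smul]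
  have hZA : (A * B * C) * A = A * (A * B * C) := by
    calc (A * B * C) * A = (A * B) * (C * A) := by rw [mul_assoc]
      _ = (q ^ 4)⁻¹ • ((A * B) * (A * C)) := by rw [hCA, mul_smul_comm]
      _ = (q ^ 4)⁻¹ • (A * ((B * A) * C)) := by
          rw [mul_assoc A B (A * C), ← mul_assoc B A C]
      _ = ((q ^ 4)⁻¹ * (q ^ 4)) • (A * ((A * B) * C)) := by
          rw [hBA, smul_mul_assoc, mul_smul_comm, smul_smul]
      _ = A * (A * B * C) := by rw [inv_mul_cancel₀ hq40, one_smul]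
  have hZB : (A * B * C) * B = B * (A * B * C) := by
    have lhs : (A * B * C) * B = (q ^ 4) • ((A * B) * (B * C)) := by
      rw [mul_assoc (A * B) C B, hCB, mul_smul_comm]
    have rhs : B * (A * B * C) = (q ^ 4) • ((A * B) * (B * C)) := by
      rw [← mul_assoc B (A * B) C, ← mul_assoc B A B, hBA, smul_mul_assoc,
        smul_mul_assoc, mul_assoc (A * B) B C]
    rw [lhs, rhs]
  have hZC : (A * B * C) * C = C * (A * B * C) := by
    have hinj := smul_right_injective (Module.End ℂ E) hq40
    apply hinj
    show (q ^ 4) • ((A * B * C) * C) = (q ^ 4) • (C * (A * B * C))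
    have rhs : (q ^ 4) • (C * (A * B * C)) = ((A * C) * B) * C := by
      rw [← mul_assoc C (A * B) C, ← mul_assoc C A B, ← smul_mul_assoc,
        ← smul_mul_assoc, ← hAC]
    have lhs : (q ^ 4) • ((A * B * C) * C) = ((A * C) * B) * C := by
      rw [mul_assoc A B C, ← smul_mul_assoc, ← mul_smul_comm, ← hCB, ← mul_assoc A C B]
    rw [lhs, rhs]
  have hZcomm : ∀ i : Fin 6, Commute (A * B * C) (ρ (mk (X i))) := by
    intro i
    fin_cases i
    · exact hZA
    · exact hZB
    · exact hZC
    · exact cf_comm_inv hAA' hA'A hZA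
    · exact cf_comm_inv hBB' hB'B hZB
    · exact cf_comm_inv hCC' hC'C hZC
  obtain ⟨h', hZ⟩ := schur _ hZcomm
  have ecan : ∀ P Q : Module.End ℂ E, P * Q = 1 → ∀ φ : Module.End ℂ E,
      P * (Q * φ) = φ := fun P Q hPQ φ => by rw [← mul_assoc, hPQ, one_mul]
  have hZinv : (A * B * C) * (C' * (B' * A')) = 1 := by
    simp only [mul_assoc]
    rw [ecan C C' hCC', ecan B B' hBB', hAA']
  have hh'0 : h' ≠ 0 := by
    intro hh
    rw [hh, zero_smul] at hZ
    rw [hZ, zero_mul] at hZinv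
    exact honeE hZinv.symm
  have hCform : C = h' • (B' * A') := by
    have h1 : C = B' * (A' * (A * (B * C))) := by
      calc C = B' * (B * C) := by rw [← mul_assoc, hB'B, one_mul]
        _ = B' * (A' * (A * (B * C))) := by
            rw [← mul_assoc A' A, hA'A, one_mul]
    rw [h1, ← mul_assoc A B C, hZ, mul_smul_comm, mul_one, mul_smul_comm]
  have hC'form : C' = h'⁻¹ • (A * B) := by
    calc C' = (h'⁻¹ • (A * B * C)) * C' := by
          rw [hZ, smul_smul, inv_mul_cancel₀ hh'0, one_smul, one_mul]
      _ = h'⁻¹ • ((A * B) * (C * C')) := by rw [smul_mul_assoc, mul_assoc]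
      _ = h'⁻¹ • (A * B) := by rw [hCC', mul_one]
  -- eigenvector of A
  obtain ⟨μ, hμ⟩ := Module.End.exists_eigenvalue A
  obtain ⟨e0, he0⟩ := hμ.exists_hasEigenvector
  have hAe0 : A e0 = μ • e0 := he0.apply_eq_smul
  have he0ne : e0 ≠ 0 := he0.right
  have hμ0 : μ ≠ 0 := by
    intro h0
    apply he0ne
    have hz : A e0 = 0 := by rw [hAe0, h0, zero_smul]
    calc e0 = (A' * A) e0 := by rw [hA'A]; rfl
      _ = A' (A e0) := rfl
      _ = 0 := by rw [hz, map_zero]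
  obtain ⟨v, hvN⟩ := IsAlgClosed.exists_pow_nat_eq b hNpos
  have hv0 : v ≠ 0 := by
    intro h0; rw [h0, zero_pow hNpos.ne'] at hvN; exact hb0 hvN.symm
  have hAB' : A * B' = (q ^ 4) • (B' * A) := cf_swap_inv hBA hBB' hB'B
  set f : ℕ → E := fun j => v ^ j • ((B' ^ j) e0) with hfdef
  have hf0 : f 0 = e0 := by simp [hfdef]
  have hfsucc : ∀ j, f (j + 1) = v • B' (f j) := by
    intro j
    simp only [hfdef]
    have h1 : (B' ^ (j + 1)) e0 = B' ((B' ^ j) e0) := by rw [pow_succ']; rfl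
    rw [h1, _root_.map_smul, smul_smul, pow_succ']
  have hfA : ∀ j : ℕ, A (f j) = (μ * q ^ (4 * j)) • f j := by
    intro j
    induction j with
    | zero => simpa [hf0] using hAe0
    | succ j ih =>
      rw [hfsucc j, _root_.map_smul]
      have h1 : A (B' (f j)) = (q ^ 4) • B' (A (f j)) := by
        calc A (B' (f j)) = (A * B') (f j) := rfl
          _ = ((q ^ 4) • (B' * A)) (f j) := by rw [hAB']
          _ = (q ^ 4) • B' (A (f j)) := rfl
      rw [h1, ih, _root_.map_smul, smul_smul, smul_smul, smul_smul]
      congr 1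
      ring
  have hfB : ∀ j, B (f (j + 1)) = v • f j := by
    intro j
    rw [hfsucc j, _root_.map_smul]
    congr 1
    calc B (B' (f j)) = (B * B') (f j) := rfl
      _ = f j := by rw [hBB']; rfl
  have hfper : Function.Periodic f N := by
    intro j
    simp only [hfdef]
    have h1 : (B' ^ (j + N)) e0 = (B' ^ j) ((B' ^ N) e0) := by rw [pow_add]; rfl
    have h2 : (B' ^ N) e0 = b⁻¹ • e0 := by rw [hB'N]; rfl
    rw [h1, h2, _root_.map_smul, smul_smul]
    congr 1
    rw [pow_add, hvN, mul_assoc, mul_inv_cancel₀ hb0, mul_one]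
  set g : Fin N → E := fun i => f (i : ℕ) with hgdef
  have hfmod : ∀ k : ℕ, f (k % N) = f k := fun k => hfper.map_mod_nat k
  have hval1 : ∀ i : Fin N, ((i + 1 : Fin N) : ℕ) = ((i : ℕ) + 1) % N := by
    intro i
    rw [Fin.val_add, Fin.val_one']
    conv_rhs => rw [Nat.add_mod]
    rw [Nat.mod_eq_of_lt i.isLt]
  have hgsucc : ∀ i : Fin N, g (i + 1) = f ((i : ℕ) + 1) := by
    intro i
    show f ((i + 1 : Fin N) : ℕ) = f ((i : ℕ) + 1)
    rw [hval1, hfmod]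
  have hgA : ∀ i : Fin N, A (g i) = (μ * q ^ (4 * (i : ℕ))) • g i := fun i => hfA i
  have hgB : ∀ i : Fin N, B (g i) = v • g (i - 1) := by
    intro i
    have h1 : g ((i - 1) + 1) = g i := by rw [sub_add_cancel]
    rw [← h1, hgsucc (i - 1)]
    exact hfB _
  have hgne : ∀ i : Fin N, g i ≠ 0 := by
    intro i h0
    apply he0ne
    have h2 : (B ^ (i : ℕ) * B' ^ (i : ℕ)) = 1 := by rw [← hcBB'.mul_pow, hBB', one_pow]
    have h3 : (B' ^ (i : ℕ)) e0 = 0 := by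
      simp only [hgdef, hfdef] at h0
      exact (smul_eq_zero.mp h0).resolve_left (pow_ne_zero _ hv0)
    calc e0 = (B ^ (i : ℕ) * B' ^ (i : ℕ)) e0 := by rw [h2]; rfl
      _ = (B ^ (i : ℕ)) ((B' ^ (i : ℕ)) e0) := rfl
      _ = 0 := by rw [h3, map_zero]
  have hinj : Function.Injective (fun i : Fin N => μ * q ^ (4 * (i : ℕ))) := by
    intro i j hij
    simp only at hij
    have h1 : q ^ (4 * (i : ℕ)) = q ^ (4 * (j : ℕ)) := mul_left_cancel₀ hμ0 hij
    have h2 : (q ^ 4) ^ (i : ℕ) = (q ^ 4) ^ (j : ℕ) := by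
      rw [← pow_mul, ← pow_mul]; exact h1
    exact Fin.val_injective (hq4.pow_inj i.isLt j.isLt h2)
  have hli : LinearIndependent ℂ g :=
    Module.End.eigenvectors_linearIndependent' A (fun i : Fin N => μ * q ^ (4 * (i : ℕ)))
      hinj g (fun i => ⟨Module.End.mem_eigenspace_iff.mpr (hgA i), hgne i⟩)
  -- the span of the g i is an invariant subspace, hence everything
  set p : Submodule ℂ E := Submodule.span ℂ (Set.range g) with hpdef
  have hgmem : ∀ i, g i ∈ p := fun i => Submodule.subset_span ⟨i, rfl⟩
  have stab : ∀ L : Module.End ℂ E, (∀ i, L (g i) ∈ p) → ∀ e ∈ p, L e ∈ p := by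
    intro L hL e he
    induction he using Submodule.span_induction with
    | mem w hw => obtain ⟨i, rfl⟩ := hw; exact hL i
    | zero => rw [map_zero]; exact p.zero_mem
    | add a c _ _ ha hc => rw [map_add]; exact p.add_mem ha hc
    | smul c a _ ha => rw [_root_.map_smul]; exact p.smul_mem c ha
  have hstabA : ∀ e ∈ p, A e ∈ p :=
    stab A fun i => by rw [hgA]; exact p.smul_mem _ (hgmem i)
  have hstabB : ∀ e ∈ p, B e ∈ p :=
    stab B fun i => by rw [hgB]; exact p.smul_mem _ (hgmem _)
  have hgA' : ∀ i : Fin N, A' (g i) = (μ * q ^ (4 * (i : ℕ)))⁻¹ • g i := by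
    intro i
    have hne : (μ * q ^ (4 * (i : ℕ))) ≠ 0 := mul_ne_zero hμ0 (pow_ne_zero _ hq0)
    have h1 : g i = A' (A (g i)) := by
      calc g i = (A' * A) (g i) := by rw [hA'A]; rfl
        _ = A' (A (g i)) := rfl
    have h2 : A' (A (g i)) = (μ * q ^ (4 * (i : ℕ))) • A' (g i) := by
      rw [hgA, _root_.map_smul]
    rw [← h1] at h2
    conv_rhs => rw [h2]
    rw [smul_smul, inv_mul_cancel₀ hne, one_smul]
  have hgB' : ∀ i : Fin N, B' (g i) = v⁻¹ • g (i + 1) := by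
    intro i
    have h1 : B (g (i + 1)) = v • g i := by
      rw [hgB (i + 1), add_sub_cancel_right]
    have h2 : B' (B (g (i + 1))) = g (i + 1) := by
      calc B' (B (g (i + 1))) = (B' * B) (g (i + 1)) := rfl
        _ = g (i + 1) := by rw [hB'B]; rfl
    rw [h1, _root_.map_smul] at h2
    conv_rhs => rw [← h2]
    rw [smul_smul, inv_mul_cancel₀ hv0, one_smul]
  have hgC : ∀ i : Fin N, C (g i)
      = (h' * (v⁻¹ * (μ * q ^ (4 * (i : ℕ)))⁻¹)) • g (i + 1) := by
    intro i
    calc C (g i) = (h' • (B' * A')) (g i) := by rw [← hCform]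
      _ = h' • B' (A' (g i)) := rfl
      _ = h' • B' ((μ * q ^ (4 * (i : ℕ)))⁻¹ • g i) := by rw [hgA']
      _ = h' • ((μ * q ^ (4 * (i : ℕ)))⁻¹ • B' (g i)) := by rw [_root_.map_smul]
      _ = h' • ((μ * q ^ (4 * (i : ℕ)))⁻¹ • (v⁻¹ • g (i + 1))) := by rw [hgB']
      _ = (h' * (v⁻¹ * (μ * q ^ (4 * (i : ℕ)))⁻¹)) • g (i + 1) := by
          rw [smul_smul, smul_smul]
          congr 1
          ring
  have hpinv : ∀ i : Fin 6, ∀ e ∈ p, ρ (mk (X i)) e ∈ p := by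
    intro i
    fin_cases i
    · exact hstabA
    · exact hstabB
    · exact stab C fun i => by rw [hgC]; exact p.smul_mem _ (hgmem _)
    · exact stab A' fun i => by rw [hgA']; exact p.smul_mem _ (hgmem _)
    · exact stab B' fun i => by rw [hgB']; exact p.smul_mem _ (hgmem _)
    · refine stab C' fun i => ?_
      have h1 : C' (g i) = h'⁻¹ • A (B (g i)) := by
        calc C' (g i) = (h'⁻¹ • (A * B)) (g i) := by rw [← hC'form]
          _ = h'⁻¹ • A (B (g i)) := rfl
      rw [h1]
      exact p.smul_mem _ (hstabA _ (hstabB _ (hgmem i)))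
  have hptop : p = ⊤ := by
    rcases hirr p (extend_inv p hpinv) with h0 | h1
    · exfalso
      have := hgmem ⟨0, hNpos⟩
      rw [h0, Submodule.mem_bot] at this
      exact hgne _ this
    · exact h1
  -- the basis
  have hsp : ⊤ ≤ Submodule.span ℂ (Set.range g) := by rw [← hpdef, hptop]
  set bas : Module.Basis (Fin N) ℂ E := Module.Basis.mk hli hsp with hbasdef
  have hbas : ∀ i, bas i = g i := fun i => by rw [hbasdef, Module.Basis.mk_apply]
  have hfinrank : Module.finrank ℂ E = N := by
    rw [Module.finrank_eq_card_basis bas, Fintype.card_fin]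
  -- matrix entry computations
  have hcond : ∀ i j : Fin N, ((j : ℕ) = ((i : ℕ) + 1) % N) ↔ (j = i + 1) := fun i j => by
    rw [← hval1 i]
    exact ⟨fun hh => Fin.val_injective hh, fun hh => by rw [hh]⟩
  have hMVent : ∀ i j : Fin N, MV N v i j = if j = i + 1 then v else 0 := fun i j => by
    simp only [MV, Matrix.of_apply]
    exact if_congr (hcond i j) rfl rfl
  have hMVapp : ∀ (x : Fin N → ℂ) (i : Fin N), (MV N v).mulVec x i = v * x (i + 1) := by
    intro x i
    have h1 : ∀ j ∈ Finset.univ, j ≠ i + 1 → MV N v i j * x j = 0 := by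
      intro j _ hj
      rw [hMVent, if_neg hj, zero_mul]
    calc (MV N v).mulVec x i = ∑ j, MV N v i j * x j := by
          simp [Matrix.mulVec, dotProduct]
      _ = MV N v i (i + 1) * x (i + 1) :=
          Finset.sum_eq_single _ h1 (fun hmem => absurd (Finset.mem_univ _) hmem)
      _ = v * x (i + 1) := by rw [hMVent, if_pos rfl]
  have hMUMV : ∀ i j : Fin N, (MU N q μ * MV N v) i j
      = if j = i + 1 then μ * q ^ (4 * (i : ℕ)) * v else 0 := fun i j => by
    simp only [MU]
    rw [Matrix.diagonal_mul, hMVent, mul_ite, mul_zero]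
  set K : Matrix (Fin N) (Fin N) ℂ :=
    Matrix.of (fun i j => if i = j + 1 then (μ * q ^ (4 * (j : ℕ)) * v)⁻¹ else 0) with hKdef
  have hPK : (MU N q μ * MV N v) * K = 1 := by
    ext i k
    rw [Matrix.mul_apply]
    have hmain : ∀ j ∈ Finset.univ, j ≠ i + 1 → (MU N q μ * MV N v) i j * K j k = 0 := by
      intro j _ hj
      rw [hMUMV, if_neg hj, zero_mul]
    rw [Finset.sum_eq_single (i + 1) hmain (fun hmem => absurd (Finset.mem_univ _) hmem),
      hMUMV, if_pos rfl, hKdef]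
    simp only [Matrix.of_apply]
    by_cases hik : i = k
    · subst hik
      rw [if_pos rfl, Matrix.one_apply_eq]
      field_simp
    · rw [if_neg (fun hh => hik (add_left_injective 1 hh)), mul_zero,
        Matrix.one_apply_ne hik]
  have hKinv : (MU N q μ * MV N v)⁻¹ = K := Matrix.inv_eq_right_inv hPK
  have hMWapp : ∀ (x : Fin N → ℂ) (i : Fin N),
      (MW N q μ v (q ^ 2 * h')).mulVec x i
        = ((q ^ 2)⁻¹ * (q ^ 2 * h'))
            * ((μ * q ^ (4 * ((i - 1 : Fin N) : ℕ)) * v)⁻¹ * x (i - 1)) := by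
    intro x i
    simp only [MW]
    rw [hKinv, Matrix.smul_mulVec]
    simp only [Pi.smul_apply, smul_eq_mul]
    congr 1
    have h1 : ∀ j ∈ Finset.univ, j ≠ i - 1 → K i j * x j = 0 := by
      intro j _ hj
      rw [hKdef]
      simp only [Matrix.of_apply]
      rw [if_neg, zero_mul]
      intro hh
      exact hj (by rw [hh, add_sub_cancel_right])
    calc K.mulVec x i = ∑ j, K i j * x j := by simp [Matrix.mulVec, dotProduct]
      _ = K i (i - 1) * x (i - 1) :=
          Finset.sum_eq_single _ h1 (fun hmem => absurd (Finset.mem_univ _) hmem)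
      _ = (μ * q ^ (4 * ((i - 1 : Fin N) : ℕ)) * v)⁻¹ * x (i - 1) := by
          rw [hKdef]
          simp only [Matrix.of_apply]
          rw [if_pos (sub_add_cancel i 1).symm]
  -- conclusion
  have hq20 : (q ^ 2 : ℂ) ≠ 0 := pow_ne_zero 2 hq0
  refine ⟨hfinrank, μ, v, q ^ 2 * h', hμ0, hv0, mul_ne_zero hq20 hh'0,
    bas.equivFun.symm, ?_, ?_, ?_⟩
  · intro x
    rw [LinearEquiv.symm_apply_eq, Module.Basis.equivFun_symm_apply, Module.Basis.equivFun_symm_apply]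
    simp only [hbas]
    rw [_root_.map_sum]
    refine Finset.sum_congr rfl fun i _ => ?_
    rw [_root_.map_smul, hgA i, smul_smul]
    simp only [MU, Matrix.mulVec_diagonal]
    rw [mul_comm]
  · intro x
    rw [LinearEquiv.symm_apply_eq, Module.Basis.equivFun_symm_apply, Module.Basis.equivFun_symm_apply]
    simp only [hbas]
    calc B (∑ i, x i • g i) = ∑ i, x i • (v • g (i - 1)) := by
          rw [_root_.map_sum]
          exact Finset.sum_congr rfl fun i _ => by rw [_root_.map_smul, hgB]
      _ = ∑ i, (v * x (i + 1)) • g i := by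
          refine Fintype.sum_equiv (Equiv.subRight (1 : Fin N)) _ _ fun i => ?_
          simp only [Equiv.subRight_apply]
          rw [sub_add_cancel, smul_smul, mul_comm]
      _ = ∑ i, (MV N v).mulVec x i • g i := by
          refine Finset.sum_congr rfl fun i _ => ?_
          rw [hMVapp]
  · intro x
    rw [LinearEquiv.symm_apply_eq, Module.Basis.equivFun_symm_apply, Module.Basis.equivFun_symm_apply]
    simp only [hbas]
    calc C (∑ i, x i • g i)
        = ∑ i, x i • ((h' * (v⁻¹ * (μ * q ^ (4 * (i : ℕ)))⁻¹)) • g (i + 1)) := by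
          rw [_root_.map_sum]
          exact Finset.sum_congr rfl fun i _ => by rw [_root_.map_smul, hgC]
      _ = ∑ i, (x (i - 1) * (h' * (v⁻¹ * (μ * q ^ (4 * ((i - 1 : Fin N) : ℕ)))⁻¹))) • g i := by
          refine Fintype.sum_equiv (Equiv.addRight (1 : Fin N)) _ _ fun i => ?_
          simp only [Equiv.coe_addRight]
          rw [add_sub_cancel_right, smul_smul]
      _ = ∑ i, (MW N q μ v (q ^ 2 * h')).mulVec x i • g i := by
          refine Finset.sum_congr rfl fun i _ => ?_
          rw [hMWapp]
          congr 1
          have hne : (μ * q ^ (4 * ((i - 1 : Fin N) : ℕ))) ≠ 0 :=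
            mul_ne_zero hμ0 (pow_ne_zero _ hq0)
          field_simp
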